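/- If x1, x2, x3 are the real zeros of a Ramanujan cubic polynomial x^3 + px^2 + qx + r (i.e., p·r^(1/3) + 3·r^(2/3) + q = 0, r ≠ 0), then x1^(1/3) + x2^(1/3) + x3^(1/3) = (-p - 6r^(1/3) + 3(9r - pq)^(1/3))^(1/3), where all cube roots are real cube roots. -/
import Mathlib


noncomputable def cbrt (x : ℝ) : ℝ := if x < 0 then -((-x) ^ ((1:ℝ)/3)) else x ^ ((1:ℝ)/3)

lemma cube_cbrt (x : ℝ) : (cbrt x) ^ 3 = x := by
  unfold cbrt
  split_ifs with h
  · have hx : (0:ℝ) ≤ -x := by linarith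
    have h2 : ((-x) ^ ((1:ℝ)/3)) ^ (3:ℕ) = -x := by
      rw [← Real.rpow_natCast ((-x) ^ ((1:ℝ)/3)) 3, ← Real.rpow_mul hx]
      norm_num
    have h3 : (-((-x) ^ ((1:ℝ)/3))) ^ 3 = -(((-x) ^ ((1:ℝ)/3)) ^ (3:ℕ)) := by ring
    rw [h3, h2]; ring
  · push_neg at h
    rw [← Real.rpow_natCast (x ^ ((1:ℝ)/3)) 3, ← Real.rpow_mul h]
    norm_num

lemma cube_inj {x y : ℝ} (h : x ^ 3 = y ^ 3) : x = y :=
  (Odd.strictMono_pow (R := ℝ) (⟨1, by norm_num⟩ : Odd 3)).injective h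

lemma cbrt_cube (x : ℝ) : cbrt (x ^ 3) = x :=
  cube_inj (cube_cbrt (x ^ 3))

theorem ramanujan_cube_root_identity (p q r x1 x2 x3 : ℝ) (hr : r ≠ 0)
    (hrcp : p * cbrt r + 3 * (cbrt r) ^ 2 + q = 0)
    (hfac : ∀ x : ℝ, x ^ 3 + p * x ^ 2 + q * x + r = (x - x1) * (x - x2) * (x - x3)) :
    cbrt x1 + cbrt x2 + cbrt x3 =
      cbrt (-p - 6 * cbrt r + 3 * cbrt (9 * r - p * q)) := by
  set t := cbrt r with htdef
  set a := cbrt x1 with hadef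
  set b := cbrt x2 with hbdef
  set c := cbrt x3 with hcdef
  have ha : a ^ 3 = x1 := cube_cbrt x1
  have hb : b ^ 3 = x2 := cube_cbrt x2
  have hc : c ^ 3 = x3 := cube_cbrt x3
  have ht : t ^ 3 = r := cube_cbrt r
  -- Vieta
  have hv1 : x1 + x2 + x3 = -p := by
    linear_combination (hfac 1) / 2 + (hfac (-1)) / 2 - hfac 0
  have hv2 : x1 * x2 + x1 * x3 + x2 * x3 = q := by
    linear_combination (hfac (-1)) / 2 - (hfac 1) / 2
  have hv3 : x1 * x2 * x3 = -r := by
    linear_combination hfac 0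
  -- relations among cube roots
  have R1 : a ^ 3 + b ^ 3 + c ^ 3 = -p := by rw [ha, hb, hc]; exact hv1
  have R2 : a ^ 3 * b ^ 3 + a ^ 3 * c ^ 3 + b ^ 3 * c ^ 3 = q := by
    rw [ha, hb, hc]; exact hv2
  have R3 : a * b * c = -t := by
    apply cube_inj
    have : (a * b * c) ^ 3 = x1 * x2 * x3 := by rw [← ha, ← hb, ← hc]; ring
    rw [this, hv3, ← ht]; ring
  have hE1 : (a + b + c) ^ 3 =
      -p + 3 * ((a + b + c) * (a * b + a * c + b * c)) + 3 * t := by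
    linear_combination R1 - 3 * R3
  have hE2 : (a * b + a * c + b * c) ^ 3 =
      -p * t - 6 * t ^ 2 - 3 * t * ((a + b + c) * (a * b + a * c + b * c)) := by
    linear_combination R2 + (3 * ((a + b + c) * (a * b + a * c + b * c)) - 3 * (a * b * c - t)) * R3 + hrcp
  have hkey : 9 * r - p * q =
      ((a + b + c) * (a * b + a * c + b * c) + 3 * t) ^ 3 := by
    linear_combination (-(a * b + a * c + b * c) ^ 3) * hE1 +
      (-(-p + 3 * ((a + b + c) * (a * b + a * c + b * c)) + 3 * t)) * hE2 -
      9 * ht - p * hrcp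
  have hcr : cbrt (9 * r - p * q) =
      (a + b + c) * (a * b + a * c + b * c) + 3 * t := by
    rw [hkey, cbrt_cube]
  rw [hcr]
  have harg : -p - 6 * t + 3 * ((a + b + c) * (a * b + a * c + b * c) + 3 * t) =
      (a + b + c) ^ 3 := by linear_combination -hE1
  rw [harg, cbrt_cube]
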